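/- Let x₀ = k/2^{2m} be a balanced dyadic rational of order m, i.e., a dyadic rational with binary expansion 0.ε₁ε₂…ε_{2m} satisfying Σ_{j=1}^{2m} (-1)^{ε_j} = 0. Then for all x ∈ [k/2^{2m}, (k+1)/2^{2m}], T(x) = T(x₀) + 2^{-2m} T(2^{2m}(x - x₀)). -/

import Mathlib

open Set

/-- `phi x` is the distance from `x` to the nearest integer. -/
noncomputable def phi (x : ℝ) : ℝ := min (Int.fract x) (1 - Int.fract x)

/-- The Takagi function. -/
noncomputable def T (x : ℝ) : ℝ := ∑' n : ℕ, (1/2 : ℝ)^n * phi (2^n * x)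

/-- The `j`-th binary digit of `x ∈ [0,1)` (terminating expansion for dyadics). -/
noncomputable def eps (x : ℝ) (j : ℕ) : ℤ := ⌊2^j * x⌋ % 2

/-- `D k x = ∑_{j=1}^k (-1)^{ε_j(x)}`. -/
noncomputable def D (k : ℕ) (x : ℝ) : ℤ :=
  ∑ j ∈ Finset.Icc 1 k, (-1 : ℤ)^((eps x j).toNat)

/-- `x₀` is a balanced dyadic rational of order `m`. -/
def BalancedDyadic (m : ℕ) (x₀ : ℝ) : Prop :=
  x₀ ∈ Set.Ico (0:ℝ) 1 ∧ (∃ k : ℕ, x₀ = (k : ℝ) / 4^m) ∧ D (2*m) x₀ = 0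

/-- The generation of a balanced dyadic rational of order `m`. -/
noncomputable def generation (m : ℕ) (x₀ : ℝ) : ℕ :=
  ((Finset.Icc 1 (2*m)).filter (fun j => D j x₀ = 0)).card

/-- The local level set of `x`. -/
def LocalLevelSet (x : ℝ) : Set ℝ :=
  {x' ∈ Set.Ico (0:ℝ) 1 | ∀ j : ℕ, |D j x'| = |D j x|}

/-- The level set of `T` at level `y`. -/
def L (y : ℝ) : Set ℝ := {x ∈ Set.Icc (0:ℝ) 1 | T x = y}

lemma phi_nonneg (x : ℝ) : 0 ≤ phi x := by
  have h1 := Int.fract_nonneg x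
  have h2 := (Int.fract_lt_one x).le
  exact le_min h1 (by linarith)

lemma phi_le_half (x : ℝ) : phi x ≤ 1/2 := by
  rcases le_total (Int.fract x) (1/2) with h | h
  · exact (min_le_left _ _).trans h
  · exact (min_le_right _ _).trans (by linarith)

lemma phi_add_int (x : ℝ) (n : ℤ) : phi (x + n) = phi x := by
  unfold phi; rw [Int.fract_add_intCast]

lemma phi_intCast (n : ℤ) : phi (n : ℝ) = 0 := by
  unfold phi; rw [Int.fract_intCast]; norm_num

lemma phi_of_le_half {t : ℝ} (h0 : 0 ≤ t) (h : t ≤ 1/2) : phi t = t := by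
  unfold phi
  rw [Int.fract_eq_self.mpr ⟨h0, by linarith⟩]
  exact min_eq_left (by linarith)

lemma phi_of_ge_half {t : ℝ} (h : 1/2 ≤ t) (h1 : t ≤ 1) : phi t = 1 - t := by
  rcases lt_or_eq_of_le h1 with h1 | h1
  · unfold phi
    rw [Int.fract_eq_self.mpr ⟨by linarith, h1⟩]
    rw [min_eq_right (by linarith)]
  · rw [h1]; unfold phi; norm_num

lemma summable_takagi (x : ℝ) : Summable (fun n : ℕ => (1/2 : ℝ)^n * phi (2^n * x)) := by
  apply Summable.of_nonneg_of_le
    (fun n => mul_nonneg (by positivity) (phi_nonneg _))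
    (fun n => ?_)
    (summable_geometric_of_lt_one (by norm_num) (by norm_num) :
      Summable fun n : ℕ => (1/2 : ℝ)^n)
  exact mul_le_of_le_one_right (by positivity) ((phi_le_half _).trans (by norm_num))

lemma phi_slope (N : ℕ) (hN : 1 ≤ N) (r : ℕ) (hr : r < 2^N) (s : ℝ)
    (hs0 : 0 ≤ s) (hs1 : s ≤ 1/2^N) :
    phi ((r:ℝ)/2^N + s) = phi ((r:ℝ)/2^N) + (if 2*r < 2^N then 1 else -1) * s := by
  have hP : (0:ℝ) < 2^N := by positivity
  set u : ℝ := (r:ℝ)/2^N with hu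
  have hu2 : u * 2^N = r := div_mul_cancel₀ _ hP.ne'
  have hu0 : 0 ≤ u := by positivity
  have hs1' : s * 2^N ≤ 1 := by
    rw [← le_div_iff₀ hP]; simpa using hs1
  have hrR : (r:ℝ) ≤ 2^N - 1 := by
    have : (r:ℝ) + 1 ≤ 2^N := by exact_mod_cast (by push_cast; exact_mod_cast Nat.cast_le.mpr hr : ((r+1:ℕ):ℝ) ≤ ((2^N:ℕ):ℝ))
    linarith
  split_ifs with h
  · have h2 : 2*r + 2 ≤ 2^N := by
      have : (2:ℕ) ∣ 2^N := dvd_pow_self 2 (by omega)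
      omega
    have h2' : 2*(r:ℝ) + 2 ≤ 2^N := by
      exact_mod_cast (by push_cast; exact_mod_cast Nat.cast_le.mpr h2 : ((2*r+2:ℕ):ℝ) ≤ ((2^N:ℕ):ℝ))
    have hus : u + s ≤ 1/2 := by nlinarith
    rw [phi_of_le_half (by linarith) hus, phi_of_le_half hu0 (by linarith)]
    ring
  · have h2 : 2^N ≤ 2*r := by omega
    have h2' : (2:ℝ)^N ≤ 2*(r:ℝ) := by
      exact_mod_cast (by push_cast; exact_mod_cast Nat.cast_le.mpr h2 : ((2^N:ℕ):ℝ) ≤ ((2*r:ℕ):ℝ))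
    have huh : 1/2 ≤ u := by nlinarith
    have hus : u + s ≤ 1 := by nlinarith
    rw [phi_of_ge_half (by linarith) hus, phi_of_ge_half huh (by nlinarith)]
    ring

lemma floor_nat_div_nat (k d : ℕ) : ⌊(k:ℝ)/(d:ℝ)⌋ = ((k / d : ℕ) : ℤ) := by
  rw [show (k:ℝ)/(d:ℝ) = (((k:ℚ)/(d:ℚ) : ℚ) : ℝ) by push_cast; ring, Rat.floor_cast]
  exact_mod_cast Rat.floor_natCast_div_natCast k d

lemma eps_eq (m n k : ℕ) (hn : n < 2*m) :
    eps ((k:ℝ)/2^(2*m)) (n+1) = (((k % 2^(2*m-n)) / 2^(2*m-n-1) : ℕ) : ℤ) := by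
  set N := 2*m - n with hN
  have hN1 : 1 ≤ N := by omega
  have hfloor : ⌊(2:ℝ)^(n+1) * ((k:ℝ)/2^(2*m))⌋ = ((k / 2^(N-1) : ℕ) : ℤ) := by
    have h1 : (2:ℝ)^(n+1) * ((k:ℝ)/2^(2*m)) = (k:ℝ)/((2^(N-1):ℕ):ℝ) := by
      have h2 : (2:ℝ)^(2*m) = 2^(n+1) * 2^(N-1) := by
        rw [← pow_add]; congr 1; omega
      push_cast
      rw [h2]
      have : (2:ℝ)^(n+1) ≠ 0 := by positivity
      field_simp
    rw [h1, floor_nat_div_nat]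
  unfold eps
  rw [hfloor]
  have h2 : 2^(N-1) * 2 = 2^N := by
    rw [← pow_succ]; congr 1; omega
  have : ((k / 2^(N-1) : ℕ) : ℤ) % 2 = ((k / 2^(N-1) % 2 : ℕ) : ℤ) := by push_cast; ring
  rw [this]
  norm_cast
  rw [← h2, Nat.mod_mul_right_div_self]

lemma head_term (m n k : ℕ) (hn : n < 2*m) (s : ℝ) (hs0 : 0 ≤ s) (hs1 : s ≤ 1/2^(2*m)) :
    phi (2^n * ((k:ℝ)/2^(2*m) + s)) =
      phi (2^n * ((k:ℝ)/2^(2*m))) +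
        ((-1:ℤ)^((eps ((k:ℝ)/2^(2*m)) (n+1)).toNat) : ℝ) * (2^n * s) := by
  set N := 2*m - n with hN
  have hN1 : 1 ≤ N := by omega
  have h2m : 2*m = n + N := by omega
  set q := k / 2^N with hq
  set r := k % 2^N with hr'
  have hr : r < 2^N := Nat.mod_lt _ (by positivity)
  have hkqr : k = 2^N * q + r := (Nat.div_add_mod k (2^N)).symm
  have hkR : (k:ℝ) = 2^N * q + r := by exact_mod_cast congrArg (Nat.cast : ℕ → ℝ) hkqr
  have hpow : (2:ℝ)^(2*m) = 2^n * 2^N := by rw [h2m, pow_add]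
  have key : (2:ℝ)^n * ((k:ℝ)/2^(2*m)) = (r:ℝ)/2^N + ((q:ℤ):ℝ) := by
    rw [hkR, hpow]
    have h1 : (2:ℝ)^n ≠ 0 := by positivity
    have h2 : (2:ℝ)^N ≠ 0 := by positivity
    push_cast
    field_simp
    ring
  have harg : (2:ℝ)^n * ((k:ℝ)/2^(2*m) + s) = ((r:ℝ)/2^N + 2^n*s) + ((q:ℤ):ℝ) := by
    rw [mul_add]
    linear_combination key
  rw [harg, phi_add_int, key, phi_add_int]
  have hsn0 : 0 ≤ (2:ℝ)^n * s := by positivity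
  have hsn1 : (2:ℝ)^n * s ≤ 1/2^N := by
    rw [hpow] at hs1
    have h1 : (0:ℝ) < 2^n := by positivity
    calc (2:ℝ)^n * s ≤ 2^n * (1/(2^n*2^N)) := mul_le_mul_of_nonneg_left hs1 h1.le
    _ = 1/2^N := by field_simp
  rw [phi_slope N hN1 r hr _ hsn0 hsn1]
  congr 1
  rw [eps_eq m n k hn, ← hN]
  by_cases h : 2*r < 2^N
  · have hrlt : r < 2^(N-1) := by
      have h1 : 2^(N-1) * 2 = 2^N := by rw [← pow_succ]; congr 1; omega
      omega
    rw [if_pos h, Nat.div_eq_of_lt hrlt]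
    norm_num
  · have h1 : 2^(N-1) * 2 = 2^N := by rw [← pow_succ]; congr 1; omega
    have hpos : 0 < 2^(N-1) := by positivity
    have hdiv : r / 2^(N-1) = 1 := by
      have hle : 1 ≤ r / 2^(N-1) := (Nat.le_div_iff_mul_le hpos).mpr (by omega)
      have hlt : r / 2^(N-1) < 2 := (Nat.div_lt_iff_lt_mul hpos).mpr (by omega)
      omega
    rw [if_neg h, hdiv]
    norm_num

theorem takagi_self_similarity (m : ℕ) (k : ℕ) (x₀ : ℝ)
    (hx₀ : x₀ = (k : ℝ) / 2^(2*m)) (hmem : x₀ ∈ Set.Ico (0:ℝ) 1)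
    (hbal : D (2*m) x₀ = 0)
    (x : ℝ) (hx : x ∈ Set.Icc x₀ (x₀ + 1/2^(2*m))) :
    T x = T x₀ + (1/2^(2*m)) * T (2^(2*m) * (x - x₀)) := by
  obtain ⟨hx1, hx2⟩ := hx
  set s := x - x₀ with hs
  have hs0 : 0 ≤ s := by rw [hs]; linarith
  have hs1 : s ≤ 1/2^(2*m) := by rw [hs]; linarith
  have hP : (0:ℝ) < 2^(2*m) := by positivity
  set t := 2^(2*m) * (x - x₀) with ht
  have hx_eq : x = (k:ℝ)/2^(2*m) + s := by rw [hs, hx₀]; ring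
  have hsplit : ∀ y : ℝ, T y = (∑ n ∈ Finset.range (2*m), (1/2:ℝ)^n * phi (2^n*y))
      + ∑' n : ℕ, (1/2:ℝ)^(n+2*m) * phi (2^(n+2*m)*y) := by
    intro y
    rw [T, ← Summable.sum_add_tsum_nat_add (2*m) (summable_takagi y)]
  rw [hsplit x, hsplit x₀]
  have htail₀ : ∑' n : ℕ, (1/2:ℝ)^(n+2*m) * phi (2^(n+2*m)*x₀) = 0 := by
    have hz : ∀ n : ℕ, (1/2:ℝ)^(n+2*m) * phi (2^(n+2*m)*x₀) = 0 := by
      intro n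
      have harg : (2:ℝ)^(n+2*m)*x₀ = (((2^n*k : ℕ) : ℤ) : ℝ) := by
        rw [hx₀]; push_cast; rw [pow_add]; field_simp
      rw [harg, phi_intCast, mul_zero]
    simp only [hz, tsum_zero]
  have htail : ∑' n : ℕ, (1/2:ℝ)^(n+2*m) * phi (2^(n+2*m)*x) = (1/2^(2*m)) * T t := by
    have hterm : ∀ n : ℕ, (1/2:ℝ)^(n+2*m) * phi (2^(n+2*m)*x)
        = (1/2^(2*m)) * ((1/2:ℝ)^n * phi (2^n * t)) := by
      intro n
      have harg : (2:ℝ)^(n+2*m)*x = 2^n*t + (((2^n*k : ℕ):ℤ):ℝ) := by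
        rw [ht, hx₀]; push_cast; rw [pow_add]; field_simp; ring
      rw [harg, phi_add_int, pow_add]
      have : ((1:ℝ)/2)^(2*m) = 1/2^(2*m) := by rw [div_pow]; norm_num
      rw [this]; ring
    rw [tsum_congr hterm, tsum_mul_left, T]
  rw [htail₀, htail, add_zero]
  have hhead : ∀ n ∈ Finset.range (2*m), (1/2:ℝ)^n * phi (2^n*x)
      = (1/2:ℝ)^n * phi (2^n*x₀) + ((-1:ℤ)^((eps x₀ (n+1)).toNat) : ℝ) * s := by
    intro n hn
    rw [Finset.mem_range] at hn
    have hht := head_term m n k hn s hs0 hs1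
    rw [← hx₀] at hht
    have hxs : x = x₀ + s := by rw [hs]; ring
    rw [hxs, hht]
    have h2n : ((1:ℝ)/2)^n * 2^n = 1 := by rw [← mul_pow]; norm_num
    linear_combination (((-1:ℤ)^((eps x₀ (n+1)).toNat) : ℝ)) * s * h2n
  rw [Finset.sum_congr rfl hhead, Finset.sum_add_distrib, ← Finset.sum_mul]
  have hZ : ∑ n ∈ Finset.range (2*m), ((-1:ℤ)^((eps x₀ (n+1)).toNat)) = D (2*m) x₀ := by
    rw [D, ← Finset.Ico_add_one_right_eq_Icc, Finset.sum_Ico_eq_sum_range]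
    norm_num [add_comm]
  have hD : ∑ n ∈ Finset.range (2*m), (((-1:ℤ)^((eps x₀ (n+1)).toNat)) : ℝ) = 0 := by
    calc ∑ n ∈ Finset.range (2*m), (((-1:ℤ)^((eps x₀ (n+1)).toNat)) : ℝ)
        = ((∑ n ∈ Finset.range (2*m), ((-1:ℤ)^((eps x₀ (n+1)).toNat)) : ℤ) : ℝ) := by
          push_cast; ring
      _ = 0 := by rw [hZ, hbal]; simp
  rw [hD, zero_mul, add_zero]
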